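/- Let A, B, C be subsets of a finite set V such that (A∩B)\C, (B∩C)\A, and (A∩C)\B are all nonempty. Then there is no bijection f : V → {1,…,n} under which f(A), f(B), f(C) are all intervals. -/
import Mathlib


/-- A (linear) interval of `Fin n`. -/
def IsInterval {n : ℕ} (S : Set (Fin n)) : Prop :=
  ∃ i j : Fin n, S = Set.Icc i j

lemma IsInterval.convex {n : ℕ} {S : Set (Fin n)} (h : IsInterval S) {a b c : Fin n}
    (ha : a ∈ S) (hc : c ∈ S) (h1 : a ≤ b) (h2 : b ≤ c) : b ∈ S := by
  obtain ⟨i, j, rfl⟩ := h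
  exact ⟨le_trans ha.1 h1, le_trans h2 hc.2⟩

/-- Three sets whose pairwise intersections each contain a point outside the third set
cannot all be realized as intervals on a line. -/
theorem stmt_4 {V : Type*} [Fintype V] (A B C : Set V)
    (hAB : ((A ∩ B) \ C).Nonempty) (hBC : ((B ∩ C) \ A).Nonempty)
    (hAC : ((A ∩ C) \ B).Nonempty) :
    ¬ ∃ f : V ≃ Fin (Fintype.card V),
        IsInterval (⇑f '' A) ∧ IsInterval (⇑f '' B) ∧ IsInterval (⇑f '' C) := by
  rintro ⟨f, hA, hB, hC⟩
  obtain ⟨x, ⟨hxA, hxB⟩, hxC⟩ := hAB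
  obtain ⟨y, ⟨hyB, hyC⟩, hyA⟩ := hBC
  obtain ⟨z, ⟨hzA, hzC⟩, hzB⟩ := hAC
  have mem : ∀ (S : Set V) (v : V), f v ∈ ⇑f '' S ↔ v ∈ S := fun S v =>
    ⟨fun ⟨w, hw, hwe⟩ => f.injective hwe ▸ hw, fun h => ⟨v, h, rfl⟩⟩
  have hxA' := (mem A x).2 hxA
  have hxB' := (mem B x).2 hxB
  have hyB' := (mem B y).2 hyB
  have hyC' := (mem C y).2 hyC
  have hzA' := (mem A z).2 hzA
  have hzC' := (mem C z).2 hzC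
  have hxC' : f x ∉ ⇑f '' C := fun h => hxC ((mem C x).1 h)
  have hyA' : f y ∉ ⇑f '' A := fun h => hyA ((mem A y).1 h)
  have hzB' : f z ∉ ⇑f '' B := fun h => hzB ((mem B z).1 h)
  rcases le_total (f x) (f y) with h1 | h1 <;>
    rcases le_total (f y) (f z) with h2 | h2 <;>
    rcases le_total (f x) (f z) with h3 | h3
  · exact hyA' (hA.convex hxA' hzA' h1 h2)
  · exact hyA' (hA.convex hxA' hzA' h1 h2)
  · exact hzB' (hB.convex hxB' hyB' h3 h2)
  · exact hxC' (hC.convex hzC' hyC' h3 h1)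
  · exact hxC' (hC.convex hyC' hzC' h1 h3)
  · exact hzB' (hB.convex hyB' hxB' h2 h3)
  · exact hyA' (hA.convex hzA' hxA' h2 h1)
  · exact hyA' (hA.convex hzA' hxA' h2 h1)
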